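/- If G is a graph on n ≥ 3 vertices with degree sequence d_1 ≤ d_2 ≤ ... ≤ d_n such that for all k < n/2 we have d_k > k, then G contains a Hamiltonian cycle. -/

import Mathlib

open List

set_option linter.unusedSectionVars false
variable {V : Type*} [DecidableEq V] {H : SimpleGraph V}

/-- A nonempty list whose consecutive elements (cyclically) are adjacent. -/
structure IsCyc (H : SimpleGraph V) (l : List V) : Prop where
  ne : l ≠ []
  chain : l.IsChain H.Adj
  loop : H.Adj (l.getLast ne) (l.head ne)

lemma IsCyc.rotate_one {l : List V} (h : IsCyc H l) : IsCyc H (l.rotate 1) := by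
  obtain ⟨ne, ch, lp⟩ := h
  match l, ne, ch, lp with
  | [a], _, _, lp => exact absurd lp (H.irrefl)
  | (a :: b :: t), _, ch, lp =>
    rw [List.rotate_cons_succ, List.rotate_zero]
    have hbt : (b :: t) ≠ [] := by simp
    refine ⟨by simp, ?_, ?_⟩
    · rw [List.isChain_append]
      refine ⟨ch.tail, List.isChain_singleton _, ?_⟩
      intro x hx y hy
      simp [List.getLast?_eq_getLast hbt] at hx
      simp at hy
      subst hx; subst hy
      rw [← List.getLast_cons (a := a) (by simp)]
      exact lp
    · have h1 : ((b :: t) ++ [a]).getLast (by simp) = a := by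
        rw [List.getLast_append_of_ne_nil (by simp) (by simp)]
        simp
      have h2 : ((b :: t) ++ [a]).head (by simp) = b := rfl
      rw [h1, h2]
      exact (List.isChain_cons_cons.mp ch).1

lemma IsCyc.rotate {l : List V} (h : IsCyc H l) (k : ℕ) : IsCyc H (l.rotate k) := by
  induction k with
  | zero => simpa using h
  | succ m ih =>
    have : l.rotate (m + 1) = (l.rotate m).rotate 1 := by
      rw [List.rotate_rotate]
    rw [this]
    exact ih.rotate_one

lemma flip_adj : (flip H.Adj) = H.Adj := by
  ext x y; exact ⟨fun h => h.symm, fun h => h.symm⟩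

lemma IsCyc.reverse {l : List V} (h : IsCyc H l) : IsCyc H l.reverse := by
  obtain ⟨ne, ch, lp⟩ := h
  have hne : l.reverse ≠ [] := by simpa using ne
  refine ⟨hne, ?_, ?_⟩
  · rw [List.isChain_reverse]; exact ch.imp (fun ⦃_ _⦄ h => h.symm)
  · rw [List.getLast_reverse, List.head_reverse]
    exact lp.symm
/-- Hamiltonian cycle as a list. -/
structure IsHamList (H : SimpleGraph V) (l : List V) extends IsCyc H l : Prop where
  nodup : l.Nodup
  covers : ∀ v : V, v ∈ l

lemma nodup_getElem_inj {l : List V} (h : l.Nodup) {i j : ℕ} (hi : i < l.length)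
    (hj : j < l.length) (he : l[i]'hi = l[j]'hj) : i = j := by
  have h2 := List.nodup_iff_injective_getElem.mp h (a₁ := ⟨i, hi⟩) (a₂ := ⟨j, hj⟩) he
  exact congrArg Fin.val h2

lemma exists_walk_of_chain : ∀ (l : List V) (a : V), List.Chain H.Adj a l →
    ∃ p : H.Walk a ((a :: l).getLast (by simp)), p.support = a :: l
  | [], a, _ => ⟨SimpleGraph.Walk.nil, rfl⟩
  | (b :: l), a, h => by
    obtain ⟨hab, hl⟩ := List.chain_cons.mp h
    obtain ⟨p, hp⟩ := exists_walk_of_chain l b hl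
    have hg : ((a :: b :: l).getLast (by simp)) = ((b :: l).getLast (by simp)) :=
      List.getLast_cons (by simp)
    refine ⟨(SimpleGraph.Walk.cons hab p).copy rfl hg.symm, ?_⟩
    simp only [SimpleGraph.Walk.support_copy, SimpleGraph.Walk.support_cons, hp]

lemma edge_start {a b c : V} {p : H.Walk a b} (hnd : p.support.Nodup) (hm : s(a, c) ∈ p.edges) :
    p.support.tail.head? = some c := by
  cases p with
  | nil => simp at hm
  | @cons _ d _ hadj q =>
    rw [SimpleGraph.Walk.edges_cons, List.mem_cons] at hm
    rcases hm with hm | hm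
    · rw [Sym2.eq_iff] at hm
      rcases hm with ⟨-, rfl⟩ | ⟨rfl, rfl⟩
      · rw [SimpleGraph.Walk.support_cons, List.tail_cons, SimpleGraph.Walk.support_eq_cons]; rfl
      · exact absurd hadj (H.irrefl)
    · exfalso
      have := SimpleGraph.Walk.fst_mem_support_of_mem_edges q hm
      rw [SimpleGraph.Walk.support_cons] at hnd
      exact (List.nodup_cons.mp hnd).1 this

lemma IsHamList.length_eq [Fintype V] {l : List V} (h : IsHamList H l) :
    l.length = Fintype.card V := by
  rw [← List.toFinset_card_of_nodup h.nodup]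
  congr 1
  apply Finset.eq_univ_of_forall
  intro v
  simpa using h.covers v

lemma IsHamList.isHamiltonian [Fintype V] {l : List V} (hcard : 3 ≤ Fintype.card V)
    (h : IsHamList H l) : H.IsHamiltonian := by
  intro _
  have hlen : l.length = Fintype.card V := h.length_eq
  obtain ⟨⟨ne, ch, lp⟩, nd, cov⟩ := h
  match l, ne, ch, lp, nd, cov, hlen with
  | (a :: t), _, ch, lp, nd, cov, hlen =>
  have hch : List.Chain H.Adj a t := ch
  obtain ⟨p, hp⟩ := exists_walk_of_chain t a hch
  have hpath : p.IsPath := SimpleGraph.Walk.IsPath.mk' (by rw [hp]; exact nd)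
  have htlen : 2 ≤ t.length := by simp only [List.length_cons] at hlen; omega
  have htne : t ≠ [] := by intro h0; rw [h0] at htlen; simp at htlen
  have hne : s(a, (a :: t).getLast (by simp)) ∉ p.edges := by
    intro hmem
    have h2 := edge_start (by rw [hp]; exact nd) hmem
    rw [hp] at h2
    simp only [List.tail_cons] at h2
    have hh : t.head htne = (a :: t).getLast (by simp) := by
      cases t with
      | nil => exact absurd rfl htne
      | cons x ts => simpa using h2
    rw [List.getLast_cons htne] at hh
    rw [List.head_eq_getElem htne, List.getLast_eq_getElem htne] at hh
    have := nodup_getElem_inj (List.nodup_cons.mp nd).2 _ _ hh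
    omega
  let q := p.reverse
  have hq : q.IsPath := hpath.reverse
  have hcyc : (SimpleGraph.Walk.cons lp.symm q).IsCycle := by
    apply SimpleGraph.Path.cons_isCycle ⟨q, hq⟩ lp.symm
    simp only [q, SimpleGraph.Walk.edges_reverse, List.mem_reverse]
    exact hne
  refine ⟨a, SimpleGraph.Walk.cons lp.symm q, ?_⟩
  rw [SimpleGraph.Walk.isHamiltonianCycle_iff_isCycle_and_support_count_tail_eq_one]
  refine ⟨hcyc, fun v => ?_⟩
  have hsup : (SimpleGraph.Walk.cons lp.symm q).support = a :: (a :: t).reverse := by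
    rw [SimpleGraph.Walk.support_cons]
    congr 1
    rw [SimpleGraph.Walk.support_reverse, hp]
  refine (congrArg (fun s => List.count v s.tail) hsup).trans ?_
  simp only [List.tail_cons]
  rw [List.count_reverse]
  exact List.count_eq_one_of_mem nd (cov v)

lemma exists_hamList_of_isHamiltonian [Fintype V] (hcard : 3 ≤ Fintype.card V)
    (h : H.IsHamiltonian) : ∃ l, IsHamList H l := by
  obtain ⟨a, p, hp⟩ := h (by omega)
  obtain ⟨t, ht⟩ : ∃ t, p.support = a :: t := ⟨_, SimpleGraph.Walk.support_eq_cons p⟩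
  have hplen : p.length = Fintype.card V := hp.length_eq
  have hslen := SimpleGraph.Walk.length_support p
  rw [ht] at hslen
  have htlen : t.length = Fintype.card V := by
    simp only [List.length_cons] at hslen; omega
  have htne : t ≠ [] := by
    intro h0; rw [h0] at htlen; simp at htlen; omega
  have hG : p.support.getLast? = some a := by
    rw [List.getLast?_eq_getLast (l := p.support) (by rw [ht]; simp), p.getLast_support]
  rw [ht] at hG
  have htq : t.getLast? = some a := by
    cases t with
    | nil => exact absurd rfl htne
    | cons x ts => rw [← hG, List.getLast?_cons_cons]
  have hsplit : t.dropLast ++ [a] = t :=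
    List.dropLast_append_getLast? a (Option.mem_def.mpr htq)
  set m := t.dropLast with hm
  have hl : p.support = (a :: m) ++ [a] := by
    rw [ht, ← hsplit]; rfl
  have htail_nd : t.Nodup := by
    have h2 := hp.isCycle.2
    rw [ht] at h2
    simpa using h2
  have hmnd : (m ++ [a]).Nodup := by rw [hsplit]; exact htail_nd
  have hnodup : (a :: m).Nodup := by
    rw [List.nodup_cons]
    obtain ⟨h1, h2, h3⟩ := List.nodup_append.mp hmnd
    exact ⟨fun hmem => h3 a hmem a (by simp) rfl, h1⟩
  have hchain := p.isChain_adj_support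
  rw [hl] at hchain
  obtain ⟨h1, h2, h3⟩ := List.isChain_append.mp hchain
  refine ⟨a :: m, ⟨⟨by simp, h1, ?_⟩, hnodup, fun v => ?_⟩⟩
  · have := h3 ((a :: m).getLast (by simp)) (by rw [List.getLast?_eq_getLast (l := a :: m) (by simp)]; rfl) a rfl
    exact this
  · have hv := hp.mem_support v
    rw [hl, List.mem_append] at hv
    rcases hv with hv | hv
    · exact hv
    · simp at hv
      subst hv
      simp
lemma getElem_idx_congr {l : List V} {i j : ℕ} (hij : i = j) (hi : i < l.length) :
    l[i]'hi = l[j]'(hij ▸ hi) := by subst hij; rfl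

lemma getLast_congr {l l' : List V} (h : l = l') (hne : l ≠ []) :
    l.getLast hne = l'.getLast (h ▸ hne) := by subst h; rfl

lemma head_congr {l l' : List V} (h : l = l') (hne : l ≠ []) :
    l.head hne = l'.head (h ▸ hne) := by subst h; rfl

lemma hamList_of_cross {l : List V} (hne : l ≠ []) (hnd : l.Nodup) (hcov : ∀ v, v ∈ l)
    (hch : l.IsChain H.Adj) {i : ℕ} (hi : i + 1 < l.length)
    (hA : H.Adj (l.head hne) (l[i + 1]'hi))
    (hB : H.Adj (l.getLast hne) (l[i]'(by omega))) :
    IsHamList H (l.take (i + 1) ++ (l.drop (i + 1)).reverse) := by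
  set l1 := l.take (i + 1) with hl1
  set l2 := l.drop (i + 1) with hl2
  have hl1len : l1.length = i + 1 := by
    rw [hl1, List.length_take]; omega
  have hl2len : l2.length = l.length - (i + 1) := by rw [hl2, List.length_drop]
  have hl1ne : l1 ≠ [] := List.ne_nil_of_length_pos (by omega)
  have hl2ne : l2 ≠ [] := List.ne_nil_of_length_pos (by omega)
  have hl2rne : l2.reverse ≠ [] := by simpa using hl2ne
  have hsplit : l1 ++ l2 = l := List.take_append_drop _ l
  have hperm : (l1 ++ l2.reverse).Perm l := by
    calc l1 ++ l2.reverse ~ l1 ++ l2 := List.Perm.append_left l1 (List.reverse_perm l2)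
    _ = l := hsplit
  have hcne : l1 ++ l2.reverse ≠ [] := by simp [hl1ne]
  -- getLast l1 = l[i]
  have hgl1 : l1.getLast hl1ne = l[i]'(by omega) := by
    have e1 : l1.getLast hl1ne = l1[l1.length - 1]'(by omega) := List.getLast_eq_getElem hl1ne
    have e2 : l1[l1.length - 1]'(by omega) = l[l1.length - 1]'(by omega) := List.getElem_take
    have e3 : l[l1.length - 1]'(by omega) = l[i]'(by omega) :=
      getElem_idx_congr (by omega) (by omega)
    exact (e1.trans e2).trans e3
  -- head l2 = l[i+1]
  have hhl2 : l2.head hl2ne = l[i + 1]'hi := List.head_drop _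
  -- getLast l2 = getLast l
  have hgl2 : l2.getLast hl2ne = l.getLast hne :=
    ((getLast_congr hsplit.symm hne).trans (List.getLast_append_of_ne_nil _ hl2ne)).symm
  -- head l1 = head l
  have hhl1 : l1.head hl1ne = l.head hne :=
    ((head_congr hsplit.symm hne).trans (List.head_append_of_ne_nil _)).symm
  refine ⟨⟨hcne, ?_, ?_⟩, hperm.nodup_iff.mpr hnd, fun v => hperm.mem_iff.mpr (hcov v)⟩
  · rw [List.isChain_append]
    refine ⟨hch.prefix (List.take_prefix _ _), ?_, ?_⟩
    · rw [List.isChain_reverse]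
      exact (hch.suffix (List.drop_suffix _ _)).imp (fun ⦃_ _⦄ h => h.symm)
    · intro x hx y hy
      rw [Option.mem_def, List.getLast?_eq_getLast hl1ne, Option.some.injEq] at hx
      rw [Option.mem_def, List.head?_eq_head hl2rne, Option.some.injEq] at hy
      subst hx; subst hy
      rw [hgl1, List.head_reverse, hgl2]
      exact hB.symm
  · have h1 : (l1 ++ l2.reverse).getLast hcne = l[i + 1]'hi := by
      rw [List.getLast_append_of_ne_nil _ hl2rne, List.getLast_reverse, hhl2]
    have h2 : (l1 ++ l2.reverse).head hcne = l.head hne := by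
      rw [List.head_append_of_ne_nil hl1ne, hhl1]
    rw [h1, h2]
    exact hA.symm

lemma degree_bound [Fintype V] [DecidableRel H.Adj]
    (hnoham : ∀ l, ¬ IsHamList H l) {l : List V} (hne : l ≠ []) (hnd : l.Nodup)
    (hcov : ∀ v, v ∈ l) (hch : l.IsChain H.Adj) (hlen3 : 3 ≤ l.length) :
    H.degree (l.head hne) + H.degree (l.getLast hne) + 1 ≤ l.length := by
  set n := l.length with hn
  set u := l.head hne with hu
  set v := l.getLast hne with hv
  have hu0 : u = l[0]'(by omega) := List.head_eq_getElem hne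
  have hvn : v = l[n - 1]'(by omega) := List.getLast_eq_getElem hne
  set A : Finset ℕ := (Finset.range (n - 1)).filter (fun i => H.Adj u (l.getD (i + 1) u)) with hA
  set B : Finset ℕ := (Finset.range (n - 1)).filter (fun i => H.Adj v (l.getD i u)) with hB
  have hgetD : ∀ (j : ℕ) (h : j < n), l.getD j u = l[j]'h := by
    intro j h
    rw [List.getD_eq_getElem?_getD, List.getElem?_eq_getElem h]
    rfl
  have hAcard : A.card = H.degree u := by
    rw [← SimpleGraph.card_neighborFinset_eq_degree]
    apply Finset.card_bij (fun i _ => l.getD (i + 1) u)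
    · intro a ha
      rw [hA, Finset.mem_filter] at ha
      rw [SimpleGraph.mem_neighborFinset]
      exact ha.2
    · intro a₁ ha₁ a₂ ha₂ hee
      rw [hA, Finset.mem_filter, Finset.mem_range] at ha₁ ha₂
      have e₁ := hgetD (a₁ + 1) (by omega)
      have e₂ := hgetD (a₂ + 1) (by omega)
      have hee2 := (e₁.symm.trans hee).trans e₂
      have := nodup_getElem_inj hnd (by omega) (by omega) hee2
      omega
    · intro b hb
      rw [SimpleGraph.mem_neighborFinset] at hb
      obtain ⟨j, hj, hjb⟩ := List.mem_iff_getElem.mp (hcov b)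
      have hj0 : j ≠ 0 := by
        intro h0
        subst h0
        rw [← hu0] at hjb
        subst hjb
        exact H.irrefl hb
      refine ⟨j - 1, ?_, ?_⟩
      · rw [hA, Finset.mem_filter, Finset.mem_range]
        have : j - 1 + 1 = j := by omega
        rw [this, hgetD _ hj, hjb]
        exact ⟨by omega, hb⟩
      · have : j - 1 + 1 = j := by omega
        rw [this, hgetD _ hj, hjb]
  have hBcard : B.card = H.degree v := by
    rw [← SimpleGraph.card_neighborFinset_eq_degree]
    apply Finset.card_bij (fun i _ => l.getD i u)
    · intro a ha
      rw [hB, Finset.mem_filter] at ha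
      rw [SimpleGraph.mem_neighborFinset]
      exact ha.2
    · intro a₁ ha₁ a₂ ha₂ hee
      rw [hB, Finset.mem_filter, Finset.mem_range] at ha₁ ha₂
      have e₁ := hgetD a₁ (by omega)
      have e₂ := hgetD a₂ (by omega)
      have hee2 := (e₁.symm.trans hee).trans e₂
      exact nodup_getElem_inj hnd (by omega) (by omega) hee2
    · intro b hb
      rw [SimpleGraph.mem_neighborFinset] at hb
      obtain ⟨j, hj, hjb⟩ := List.mem_iff_getElem.mp (hcov b)
      have hjn : j ≠ n - 1 := by
        intro h0
        subst h0
        rw [← hvn] at hjb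
        subst hjb
        exact H.irrefl hb
      refine ⟨j, ?_, ?_⟩
      · rw [hB, Finset.mem_filter, Finset.mem_range]
        rw [hgetD _ hj, hjb]
        exact ⟨by omega, hb⟩
      · rw [hgetD _ hj, hjb]
  have hdisj : Disjoint A B := by
    rw [Finset.disjoint_left]
    intro i hiA hiB
    rw [hA, Finset.mem_filter, Finset.mem_range] at hiA
    rw [hB, Finset.mem_filter, Finset.mem_range] at hiB
    obtain ⟨hilt, hadjA⟩ := hiA
    obtain ⟨-, hadjB⟩ := hiB
    rw [hgetD _ (by omega)] at hadjA
    rw [hgetD _ (by omega)] at hadjB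
    exact hnoham _ (hamList_of_cross hne hnd hcov hch (by omega) hadjA hadjB)
  have hsub : A ∪ B ⊆ Finset.range (n - 1) := by
    apply Finset.union_subset <;> exact Finset.filter_subset _ _
  have := Finset.card_le_card hsub
  rw [Finset.card_union_of_disjoint hdisj, Finset.card_range, hAcard, hBcard] at this
  omega
lemma list_length_eq_card [Fintype V] {l : List V} (hnd : l.Nodup) (hcov : ∀ v, v ∈ l) :
    l.length = Fintype.card V := by
  rw [← List.toFinset_card_of_nodup hnd]
  congr 1
  apply Finset.eq_univ_of_forall
  intro v
  simpa using hcov v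

lemma complete_isHamiltonian [Fintype V] (hcard : 3 ≤ Fintype.card V)
    (hcomp : ∀ u v : V, u ≠ v → H.Adj u v) : H.IsHamiltonian := by
  set l := Finset.univ.toList (α := V) with hl
  have hnd : l.Nodup := Finset.nodup_toList _
  have hcov : ∀ v : V, v ∈ l := by intro v; simp [hl]
  have hlen : l.length = Fintype.card V := list_length_eq_card hnd hcov
  have hne : l ≠ [] := List.ne_nil_of_length_pos (by omega)
  refine IsHamList.isHamiltonian hcard ⟨⟨hne, ?_, ?_⟩, hnd, hcov⟩
  · exact List.Pairwise.isChain (hnd.imp (fun h => hcomp _ _ h))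
  · apply hcomp
    rw [List.getLast_eq_getElem hne, List.head_eq_getElem hne]
    intro heq
    have := nodup_getElem_inj hnd (by omega) (by omega) heq
    omega

lemma exists_ham_path [Fintype V] {H : SimpleGraph V} (hcard : 3 ≤ Fintype.card V)
    (hH : ¬ H.IsHamiltonian)
    (hmax : ∀ H', H ≤ H' → ¬ H'.IsHamiltonian → H' = H)
    {u v : V} (huv : u ≠ v) (hadj : ¬ H.Adj u v) :
    ∃ (c : List V) (hne : c ≠ []), c.Nodup ∧ (∀ w, w ∈ c) ∧ c.IsChain H.Adj ∧
      c.head hne = u ∧ c.getLast hne = v := by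
  classical
  set H' := H ⊔ SimpleGraph.edge u v with hH'
  have hlt : H' ≠ H := by
    intro he
    have : H'.Adj u v := by
      rw [hH', SimpleGraph.sup_adj, SimpleGraph.edge_adj]
      exact Or.inr ⟨Or.inl ⟨rfl, rfl⟩, huv⟩
    rw [he] at this
    exact hadj this
  have hH'ham : H'.IsHamiltonian := by
    by_contra hcon
    exact hlt (hmax H' le_sup_left hcon)
  obtain ⟨l, hl⟩ := exists_hamList_of_isHamiltonian hcard hH'ham
  have hllen : l.length = Fintype.card V := hl.length_eq
  have hnoham : ∀ m : List V, ¬ IsHamList H m := fun m hm => hH (hm.isHamiltonian hcard)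
  -- find a cyclically consecutive pair that is not H-adjacent, rotated to the boundary
  have hkey : ∃ (c : List V) (hne : c ≠ []), IsCyc H' c ∧ c.Nodup ∧ (∀ w, w ∈ c) ∧
      ¬ H.Adj (c.getLast hne) (c.head hne) := by
    by_cases hc1 : l.IsChain H.Adj
    · by_cases hc2 : H.Adj (l.getLast hl.ne) (l.head hl.ne)
      · exact absurd ⟨⟨hl.ne, hc1, hc2⟩, hl.nodup, hl.covers⟩ (hnoham l)
      · exact ⟨l, hl.ne, hl.toIsCyc, hl.nodup, hl.covers, hc2⟩
    · rw [List.isChain_iff_getElem] at hc1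
      push_neg at hc1
      obtain ⟨j, hj, hbad⟩ := hc1
      set c := l.rotate (j + 1) with hc
      have hrot : c = l.drop (j + 1) ++ l.take (j + 1) := by
        rw [hc, List.rotate_eq_drop_append_take (by omega)]
      have hdne : l.drop (j + 1) ≠ [] := List.ne_nil_of_length_pos (by simp; omega)
      have htne : l.take (j + 1) ≠ [] := List.ne_nil_of_length_pos (by simp; omega)
      have hcne : c ≠ [] := by rw [hrot]; simp [hdne]
      have hchead : c.head hcne = l[j + 1]'(by omega) := by
        rw [head_congr hrot hcne, List.head_append_of_ne_nil hdne]
        exact List.head_drop _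
      have hclast : c.getLast hcne = l[j]'(by omega) := by
        rw [getLast_congr hrot hcne, List.getLast_append_of_ne_nil _ htne]
        have e1 := List.getLast_eq_getElem htne
        have e2 : (l.take (j + 1))[(l.take (j + 1)).length - 1]'(by simp; omega) =
            l[(l.take (j + 1)).length - 1]'(by simp; omega) := List.getElem_take
        have e3 : l[(l.take (j + 1)).length - 1]'(by simp; omega) = l[j]'(by omega) :=
          getElem_idx_congr (by simp; omega) _
        exact (e1.trans e2).trans e3
      refine ⟨c, hcne, hl.toIsCyc.rotate _, List.nodup_rotate.mpr hl.nodup,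
        fun w => List.mem_rotate.mpr (hl.covers w), ?_⟩
      rw [hchead, hclast]
      simpa using hbad
  obtain ⟨c, hcne, hcyc, hcnd, hccov, hcbad⟩ := hkey
  have hcadj : H'.Adj (c.getLast hcne) (c.head hcne) := hcyc.loop
  rw [hH', SimpleGraph.sup_adj] at hcadj
  rcases hcadj with hcadj | hcadj
  · exact absurd hcadj hcbad
  rw [SimpleGraph.edge_adj] at hcadj
  have hclen : c.length = Fintype.card V := list_length_eq_card hcnd hccov
  -- common final step, for a cycle list with last/head being u,v in the right order
  have final : ∀ (c' : List V) (hne' : c' ≠ []), IsCyc H' c' → c'.Nodup → (∀ w, w ∈ c') →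
      c'.getLast hne' = v → c'.head hne' = u →
      ∃ (m : List V) (hnem : m ≠ []), m.Nodup ∧ (∀ w, w ∈ m) ∧ m.IsChain H.Adj ∧
        m.head hnem = u ∧ m.getLast hnem = v := by
    intro c' hne' hcyc' hnd' hcov' hlast' hhead'
    have hclen' : c'.length = Fintype.card V := list_length_eq_card hnd' hcov'
    refine ⟨c', hne', hnd', hcov', ?_, hhead', hlast'⟩
    rw [List.isChain_iff_getElem]
    intro i hilt
    have hadj' : H'.Adj (c'[i]'(by omega)) (c'[i+1]'(by omega)) := by
      have := List.isChain_iff_getElem.mp hcyc'.chain i hilt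
      simpa using this
    rw [hH', SimpleGraph.sup_adj] at hadj'
    rcases hadj' with hadj' | hadj'
    · exact hadj'
    exfalso
    rw [SimpleGraph.edge_adj] at hadj'
    have hu0 : c'[0]'(by omega) = u := by rw [← hhead', List.head_eq_getElem]
    have hvN : c'[c'.length - 1]'(by omega) = v := by rw [← hlast', List.getLast_eq_getElem]
    rcases hadj'.1 with ⟨h1, h2⟩ | ⟨h1, h2⟩
    · -- c'[i] = u, c'[i+1] = v
      have hi0 : i = 0 := nodup_getElem_inj hnd' (by omega) (by omega) (h1.trans hu0.symm)
      have hiN : i + 1 = c'.length - 1 :=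
        nodup_getElem_inj hnd' (by omega) (by omega) (h2.trans hvN.symm)
      omega
    · -- c'[i] = v
      have hiN : i = c'.length - 1 :=
        nodup_getElem_inj hnd' (by omega) (by omega) (h1.trans hvN.symm)
      omega
  rcases hcadj.1 with ⟨h1, h2⟩ | ⟨h1, h2⟩
  · -- getLast c = u, head c = v : use the reverse of c
    have hrne : c.reverse ≠ [] := by simpa using hcne
    apply final c.reverse hrne hcyc.reverse (by simpa using hcnd)
      (fun w => by simpa using hccov w)
    · rw [List.getLast_reverse]
      exact h2
    · rw [List.head_reverse]
      exact h1
  · exact final c hcne hcyc hcnd hccov h1 h2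
/-- Pósa's theorem: if the nondecreasing degree sequence `d` of a graph `G` on `n ≥ 3`
vertices satisfies `d_k > k` for all `k < n/2` (1-indexed), then `G` is Hamiltonian. -/
theorem posa_hamiltonian {n : ℕ} (hn : 3 ≤ n) (G : SimpleGraph (Fin n))
    [DecidableRel G.Adj] (d : Fin n → ℕ) (σ : Fin n ≃ Fin n)
    (hmono : Monotone d) (hdeg : ∀ i, G.degree (σ i) = d i)
    (hposa : ∀ i : Fin n, 2 * (i.val + 1) < n → i.val + 1 < d i) :
    G.IsHamiltonian := by
  classical
  have hcard : 3 ≤ Fintype.card (Fin n) := by simpa using hn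
  by_contra hG
  set S : Set (SimpleGraph (Fin n)) := {H | G ≤ H ∧ ¬H.IsHamiltonian} with hS
  obtain ⟨H, hHS, hmax0⟩ := Set.Finite.exists_maximal (Set.toFinite S)
    ⟨G, le_refl G, hG⟩
  have hmax : ∀ H', H ≤ H' → ¬H'.IsHamiltonian → H' = H := fun H' h1 h2 =>
    le_antisymm (hmax0 ⟨le_trans hHS.1 h1, h2⟩ h1) h1
  letI : DecidableRel H.Adj := Classical.decRel _
  have hdmono : ∀ w, G.degree w ≤ H.degree w := by
    intro w
    apply Finset.card_le_card
    intro x hx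
    rw [SimpleGraph.mem_neighborFinset] at hx ⊢
    exact hHS.1 hx
  have key : ∀ u v : Fin n, u ≠ v → ¬H.Adj u v → H.degree u ≤ H.degree v →
      (∀ w, w ≠ v → ¬H.Adj v w → H.degree w ≤ H.degree u) → False := by
    intro u v huv hnadj hle hpairmax
    obtain ⟨c, hcne, hcnd, hccov, hcch, hchead, hclast⟩ :=
      exists_ham_path hcard hHS.2 hmax huv hnadj
    have hclen : c.length = n := by rw [list_length_eq_card hcnd hccov, Fintype.card_fin]
    set k := H.degree u with hk
    have hk1 : 1 ≤ k := by
      have h01 := List.isChain_iff_getElem.mp hcch 0 (by omega)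
      have h0 := hchead
      rw [List.head_eq_getElem] at h0
      rw [h0] at h01
      have hpos : 0 < H.degree u := (SimpleGraph.degree_pos_iff_exists_adj _ _).mpr ⟨_, h01⟩
      omega
    have hnoham : ∀ m : List (Fin n), ¬ IsHamList H m := fun m hm =>
      hHS.2 (hm.isHamiltonian hcard)
    have hsum := degree_bound hnoham hcne hcnd hccov hcch (by omega)
    rw [hchead, hclast, hclen] at hsum
    set Sv : Finset (Fin n) := Finset.univ.filter (fun w => w ≠ v ∧ ¬H.Adj v w) with hSv
    have hSvcard : Sv.card = n - (H.degree v + 1) := by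
      have heq : Sv = (insert v (H.neighborFinset v))ᶜ := by
        ext w
        simp only [hSv, Finset.mem_filter, Finset.mem_univ, true_and, Finset.mem_compl,
          Finset.mem_insert, SimpleGraph.mem_neighborFinset, not_or]
      rw [heq, Finset.card_compl, Finset.card_insert_of_notMem (by simp),
          SimpleGraph.card_neighborFinset_eq_degree, Fintype.card_fin]
    have hdegvn : H.degree v + 1 ≤ n := by omega
    have hkS : k ≤ Sv.card := by omega
    have hSdeg : ∀ w ∈ Sv, H.degree w ≤ k := by
      intro w hw
      rw [hSv, Finset.mem_filter] at hw
      exact hpairmax w hw.2.1 hw.2.2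
    set T : Finset (Fin n) := Sv.image σ.symm with hT
    have hTcard : T.card = Sv.card := Finset.card_image_of_injective _ σ.symm.injective
    have hex : ∃ j ∈ T, k - 1 ≤ j.val := by
      by_contra hcon
      push_neg at hcon
      have hsub : T ⊆ Finset.univ.filter (fun j : Fin n => j.val < k - 1) := by
        intro j hj
        rw [Finset.mem_filter]
        exact ⟨Finset.mem_univ _, hcon j hj⟩
      have h1 := Finset.card_le_card hsub
      have h2 : (Finset.univ.filter (fun j : Fin n => j.val < k - 1)).card ≤ k - 1 := by
        have := Finset.card_le_card_of_injOn
          (s := Finset.univ.filter (fun j : Fin n => j.val < k - 1))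
          (t := Finset.range (k - 1)) Fin.val
          (fun a ha => by rw [Finset.mem_coe, Finset.mem_filter] at ha; simpa using ha.2)
          (fun a _ b _ h => Fin.val_injective h)
        simpa using this
      omega
    obtain ⟨j, hjT, hjge⟩ := hex
    rw [hT, Finset.mem_image] at hjT
    obtain ⟨w, hwS, hwj⟩ := hjT
    have hdj : d j ≤ k := by
      rw [← hdeg j]
      have hsw : σ j = w := by rw [← hwj]; simp
      rw [hsw]
      exact le_trans (hdmono w) (hSdeg w hwS)
    have hkn : k - 1 < n := by omega
    have hp := hposa ⟨k - 1, hkn⟩ (by simp only; omega)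
    have hmono' := hmono (show (⟨k - 1, hkn⟩ : Fin n) ≤ j from hjge)
    simp only at hp
    omega
  by_cases hcomp : ∀ u v : Fin n, u ≠ v → H.Adj u v
  · exact hHS.2 (complete_isHamiltonian hcard hcomp)
  push_neg at hcomp
  obtain ⟨x, y, hxy, hnxy⟩ := hcomp
  set P : Finset (Fin n × Fin n) :=
    Finset.univ.filter (fun p => p.1 ≠ p.2 ∧ ¬H.Adj p.1 p.2) with hP
  have hPne : P.Nonempty :=
    ⟨(x, y), by rw [hP, Finset.mem_filter]; exact ⟨Finset.mem_univ _, hxy, hnxy⟩⟩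
  obtain ⟨⟨a, b⟩, habP, hmaxP⟩ :=
    Finset.exists_max_image P (fun p => H.degree p.1 + H.degree p.2) hPne
  rw [hP, Finset.mem_filter] at habP
  obtain ⟨-, hab, hnab⟩ := habP
  have hPmem : ∀ w z : Fin n, w ≠ z → ¬H.Adj w z →
      H.degree w + H.degree z ≤ H.degree a + H.degree b := by
    intro w z h1 h2
    exact hmaxP (w, z) (by rw [hP, Finset.mem_filter]; exact ⟨Finset.mem_univ _, h1, h2⟩)
  rcases le_total (H.degree a) (H.degree b) with hle | hle
  · exact key a b hab hnab hle (fun w hw1 hw2 => by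
      have := hPmem w b hw1 (fun h => hw2 h.symm)
      omega)
  · exact key b a hab.symm (fun h => hnab h.symm) hle (fun w hw1 hw2 => by
      have := hPmem w a hw1 (fun h => hw2 h.symm)
      omega)
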